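/- Let $(\alpha_i)$, $(\beta_i)$, $(\gamma_i)$ and $(a_i)$ be sequences of nonnegative real numbers such that $a_{i+1} \leq \alpha_i + \beta_i(a_0 + a_1 + \cdots + a_{i-1}) + (1+\gamma_i)a_i$ for all $i \in \mathbb{N}$. Then for every $j \geq 1$, $a_j \leq \big(a_0 + \sum_{k=0}^{j-1}\alpha_k\big)\exp\big(\sum_{k=0}^{j-1}(k\beta_k + \gamma_k)\big)$. -/

import Mathlib

open Finset

namespace GronwallPaper

/-- Discrete Gronwall-type inequality (Lemma 2.5). -/
theorem discrete_gronwall (α β γ a : ℕ → ℝ)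
    (hα : ∀ i, 0 ≤ α i) (hβ : ∀ i, 0 ≤ β i) (hγ : ∀ i, 0 ≤ γ i) (ha : ∀ i, 0 ≤ a i)
    (hrec : ∀ i : ℕ, a (i + 1) ≤ α i + β i * (∑ k ∈ range i, a k) + (1 + γ i) * a i) :
    ∀ j : ℕ, 1 ≤ j →
      a j ≤ (a 0 + ∑ k ∈ range j, α k) *
        Real.exp (∑ k ∈ range j, ((k : ℝ) * β k + γ k)) := by
  set P : ℕ → ℝ := fun i =>
    (a 0 + ∑ k ∈ range i, α k) * ∏ k ∈ range i, (1 + (k : ℝ) * β k + γ k) with hP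
  have hfac : ∀ k : ℕ, (1 : ℝ) ≤ 1 + (k : ℝ) * β k + γ k := by
    intro k
    have h1 : (0:ℝ) ≤ (k : ℝ) := Nat.cast_nonneg k
    nlinarith [hβ k, hγ k]
  have hprod1 : ∀ i, (1 : ℝ) ≤ ∏ k ∈ range i, (1 + (k : ℝ) * β k + γ k) := by
    intro i
    calc (1 : ℝ) = ∏ _k ∈ range i, (1:ℝ) := by simp
    _ ≤ _ := Finset.prod_le_prod (by intros; norm_num) (fun k _ => hfac k)
  have hbase : ∀ i, 0 ≤ a 0 + ∑ k ∈ range i, α k := fun i =>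
    add_nonneg (ha 0) (Finset.sum_nonneg fun k _ => hα k)
  have hP0 : ∀ i, 0 ≤ P i := fun i =>
    mul_nonneg (hbase i) (le_trans zero_le_one (hprod1 i))
  have hPmono : Monotone P := by
    apply monotone_nat_of_le_succ
    intro i
    simp only [hP, Finset.sum_range_succ, Finset.prod_range_succ]
    have h1 : ∏ k ∈ range i, (1 + (k : ℝ) * β k + γ k) ≤
        (∏ k ∈ range i, (1 + (k : ℝ) * β k + γ k)) * (1 + (i : ℝ) * β i + γ i) :=
      le_mul_of_one_le_right (le_trans zero_le_one (hprod1 i)) (hfac i)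
    have := hbase i
    have := hα i
    nlinarith [hprod1 i]
  have key : ∀ i, a i ≤ P i := by
    intro i
    induction i using Nat.strong_induction_on with
    | _ i ih =>
      match i with
      | 0 => simp [hP]
      | Nat.succ n =>
        have hsum : ∑ k ∈ range n, a k ≤ (n : ℝ) * P n := by
          calc ∑ k ∈ range n, a k ≤ ∑ _k ∈ range n, P n := by
                apply Finset.sum_le_sum
                intro k hk
                exact le_trans (ih k (lt_trans (mem_range.mp hk) (Nat.lt_succ_self n)))
                  (hPmono (le_of_lt (mem_range.mp hk)))
          _ = (n : ℝ) * P n := by simp [mul_comm]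
        have han : a n ≤ P n := ih n (Nat.lt_succ_self n)
        have h1 := hrec n
        have hPn0 := hP0 n
        have hstep : α n + β n * ((n : ℝ) * P n) + (1 + γ n) * P n ≤ P (n + 1) := by
          simp only [hP, Finset.sum_range_succ, Finset.prod_range_succ]
          have hPi := hprod1 n
          have hf := hfac n
          have hB := hbase n
          have hPif : (1:ℝ) ≤ (∏ k ∈ range n, (1 + (k : ℝ) * β k + γ k)) *
              (1 + (n : ℝ) * β n + γ n) := by
            calc (1:ℝ) = 1 * 1 := by ring
            _ ≤ _ := mul_le_mul hPi hf zero_le_one (le_trans zero_le_one hPi)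
          nlinarith [mul_nonneg (hα n) (sub_nonneg.mpr hPif)]
        have h2 : a (n + 1) ≤ α n + β n * ((n : ℝ) * P n) + (1 + γ n) * P n := by
          have hb := hβ n
          have hg := hγ n
          nlinarith [ha n]
        exact le_trans h2 hstep
  intro j _hj
  have h1 : P j ≤ (a 0 + ∑ k ∈ range j, α k) *
      Real.exp (∑ k ∈ range j, ((k : ℝ) * β k + γ k)) := by
    apply mul_le_mul_of_nonneg_left _ (hbase j)
    calc ∏ k ∈ range j, (1 + (k : ℝ) * β k + γ k)
        ≤ ∏ k ∈ range j, Real.exp ((k : ℝ) * β k + γ k) := by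
          apply Finset.prod_le_prod
          · intro k _; exact le_trans zero_le_one (hfac k)
          · intro k _
            have := Real.add_one_le_exp ((k : ℝ) * β k + γ k)
            linarith
    _ = Real.exp (∑ k ∈ range j, ((k : ℝ) * β k + γ k)) := (Real.exp_sum _ _).symm
  exact le_trans (key j) h1

end GronwallPaper
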